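/- The mapping that removes all scope-delimiter vertices from a λ-term-graph (connecting incoming edges of each S-vertex to its 0-th successor) and retains the abstraction-prefix function yields a λ-ho-term-graph, and it is a left inverse of the mapping that inserts a chain of delimiter vertices along every edge of a λ-ho-term-graph where the abstraction prefix decreases: first inserting delimiters and then removing them returns the original λ-ho-term-graph. -/

import Mathlib

/-- A (root-connected) term graph over signature `Sig` with arity function `ar`,
    with vertex type `V`. -/
structure TermGraph (Sig : Type) (ar : Sig → ℕ) (V : Type) where
  lab : V → Sig
  args : V → List V
  root : V
  arity_ok : ∀ v, (args v).length = ar (lab v)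
  rooted : ∀ v, Relation.ReflTransGen (fun a b => b ∈ args a) root v

/-- `R` is a bisimulation between term graphs `G₁` and `G₂`. -/
def IsBisim {Sig : Type} {ar : Sig → ℕ} {V₁ V₂ : Type}
    (G₁ : TermGraph Sig ar V₁) (G₂ : TermGraph Sig ar V₂)
    (R : V₁ → V₂ → Prop) : Prop :=
  R G₁.root G₂.root ∧
  (∀ v w, R v w → G₁.lab v = G₂.lab w) ∧
  (∀ v w, R v w → List.Forall₂ R (G₁.args v) (G₂.args w))

/-- `G₁` and `G₂` are bisimilar. -/
def Bisim {Sig : Type} {ar : Sig → ℕ} {V₁ V₂ : Type}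
    (G₁ : TermGraph Sig ar V₁) (G₂ : TermGraph Sig ar V₂) : Prop :=
  ∃ R, IsBisim G₁ G₂ R

/-- `h` is a homomorphism of term graphs: it maps root to root, preserves labels,
    and commutes with the argument function. -/
def IsHom {Sig : Type} {ar : Sig → ℕ} {V₁ V₂ : Type}
    (G₁ : TermGraph Sig ar V₁) (G₂ : TermGraph Sig ar V₂) (h : V₁ → V₂) : Prop :=
  h G₁.root = G₂.root ∧
  (∀ v, G₂.lab (h v) = G₁.lab v) ∧
  (∀ v, G₂.args (h v) = (G₁.args v).map h)

/-- There exists a functional bisimulation (homomorphism) from `G₁` to `G₂`. -/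
def FunBisim {Sig : Type} {ar : Sig → ℕ} {V₁ V₂ : Type}
    (G₁ : TermGraph Sig ar V₁) (G₂ : TermGraph Sig ar V₂) : Prop :=
  ∃ h, IsHom G₁ G₂ h

/-- The signature for first-order lambda term graphs with scope delimiters:
    application, abstraction, variable occurrence, scope delimiter, black hole. -/
inductive LamSig : Type
  | app | lam | var | del | bh
deriving DecidableEq

/-- Arities for the lambda signature with scope delimiters. -/
def arL : LamSig → ℕ
  | .app => 2
  | .lam => 1
  | .var => 1
  | .del => 2
  | .bh  => 0

/-- A correct abstraction-prefix function for a term graph over the lambda signature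
    with scope delimiters. -/
structure CorrectPrefix {V : Type} (G : TermGraph LamSig arL V)
    (P : V → List V) : Prop where
  root : P G.root = []
  blackhole : ∀ v, G.lab v = LamSig.bh → P v = []
  lamCond : ∀ w v, G.lab w = LamSig.lam → (G.args w)[0]? = some v →
    P v = P w ++ [w]
  appCond : ∀ w v (k : ℕ), G.lab w = LamSig.app → (G.args w)[k]? = some v →
    P v = P w
  varCond : ∀ w v, G.lab w = LamSig.var → (G.args w)[0]? = some v →
    G.lab v = LamSig.lam ∧ P v ++ [v] = P w
  delCond0 : ∀ w v, G.lab w = LamSig.del → (G.args w)[0]? = some v →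
    ∃ u, P v ++ [u] = P w
  delCond1 : ∀ w v, G.lab w = LamSig.del → (G.args w)[1]? = some v →
    G.lab v = LamSig.lam ∧ P v ++ [v] = P w

/-- The signature for lambda higher-order term graphs:
    application, abstraction, variable occurrence, black hole. -/
inductive HoSig : Type
  | app | lam | var | bh
deriving DecidableEq

/-- Arities for the higher-order lambda signature. -/
def arH : HoSig → ℕ
  | .app => 2
  | .lam => 1
  | .var => 1
  | .bh  => 0

/-- A correct abstraction-prefix function for a term graph over the higher-order
    lambda signature (the data of a lambda higher-order term graph). -/
structure CorrectPrefixHo {V : Type} (G : TermGraph HoSig arH V)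
    (P : V → List V) : Prop where
  root : P G.root = []
  blackhole : ∀ v, G.lab v = HoSig.bh → P v = []
  lamCond : ∀ w v, G.lab w = HoSig.lam → (G.args w)[0]? = some v →
    P v <+: P w ++ [w]
  appCond : ∀ w v (k : ℕ), G.lab w = HoSig.app → (G.args w)[k]? = some v →
    P v <+: P w
  varCond : ∀ w v, G.lab w = HoSig.var → (G.args w)[0]? = some v →
    G.lab v = HoSig.lam ∧ P v ++ [v] = P w

/-- Eager scope: for every vertex whose abstraction prefix ends in an abstraction
    vertex, there is a path to that abstraction vertex passing only through vertices
    whose prefixes extend the prefix of the starting vertex, whose last step goes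
    from a variable vertex to the abstraction vertex. -/
def EagerScope {V : Type} (G : TermGraph HoSig arH V) (P : V → List V) : Prop :=
  ∀ w p v, P w = p ++ [v] →
    ∃ ws : List V, ws.head? = some w ∧
      List.Chain' (fun a b => b ∈ G.args a) ws ∧
      (∀ u ∈ ws.tail, P w <+: P u) ∧
      ∃ wm, ws.getLast? = some wm ∧ G.lab wm = HoSig.var ∧
        (G.args wm)[0]? = some v

/-- The evident inclusion of the higher-order lambda signature into the lambda
    signature with scope delimiters. -/
def labToLam : HoSig → LamSig
  | .app => .app
  | .lam => .lam
  | .var => .var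
  | .bh  => .bh

/-- One step through a scope-delimiter vertex: from a delimiter vertex to its 0-th
    successor. -/
def SStep {V : Type} (G : TermGraph LamSig arL V) (x y : V) : Prop :=
  G.lab x = LamSig.del ∧ (G.args x)[0]? = some y

/-- The correspondence, via an embedding of vertices, between a term graph over the
    higher-order lambda signature (with an abstraction-prefix function) and a lambda
    term graph with scope delimiters: the higher-order graph is the result of
    removing all delimiter vertices from the first-order graph (connecting incoming
    edges of each delimiter vertex to its 0-th successor) while retaining the
    abstraction-prefix function; equivalently, the first-order graph results from
    the higher-order graph by inserting chains of delimiter vertices along edges at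
    which the abstraction prefix decreases. -/
def DelimCorr {V' V : Type} (H : TermGraph HoSig arH V') (P : V' → List V')
    (G : TermGraph LamSig arL V) (PG : V → List V) (ι : V' → V) : Prop :=
  Function.Injective ι ∧
  ι H.root = G.root ∧
  (∀ v, G.lab (ι v) = labToLam (H.lab v)) ∧
  (∀ a : V, G.lab a ≠ LamSig.del → ∃ v, ι v = a) ∧
  (∀ v, PG (ι v) = (P v).map ι) ∧
  (∀ v (i : ℕ) u, (H.args v)[i]? = some u ↔
    ∃ a, (G.args (ι v))[i]? = some a ∧
      Relation.ReflTransGen (SStep G) a (ι u))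

lemma labToLam_inj : Function.Injective labToLam := by
  intro a b h; cases a <;> cases b <;> simp_all [labToLam]

lemma labToLam_ne_del (s : HoSig) : labToLam s ≠ LamSig.del := by
  cases s <;> simp [labToLam]

lemma map_prefix_reflect {α β : Type} {f : α → β} (hf : Function.Injective f)
    {l1 l2 : List α} (h : l1.map f <+: l2.map f) : l1 <+: l2 := by
  rcases List.prefix_map_iff.mp h with ⟨l, hl, heq⟩
  rwa [List.map_injective_iff.mpr hf heq]

lemma sstep_unique {V : Type} (G : TermGraph LamSig arL V) :
    ∀ {a b b' : V}, Relation.ReflTransGen (SStep G) a b →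
      Relation.ReflTransGen (SStep G) a b' →
      G.lab b ≠ LamSig.del → G.lab b' ≠ LamSig.del → b = b' := by
  intro a b b' h1
  induction h1 using Relation.ReflTransGen.head_induction_on with
  | refl =>
    intro h2 hb hb'
    rcases Relation.ReflTransGen.cases_head h2 with rfl | ⟨c, hc, _⟩
    · rfl
    · exact absurd hc.1 hb
  | head hstep _ ih =>
    intro h2 hb hb'
    rcases Relation.ReflTransGen.cases_head h2 with rfl | ⟨c, hc, h2'⟩
    · exact absurd hstep.1 hb'
    · have : c = _ := Option.some.inj (hc.2.symm.trans hstep.2)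
      exact ih (this ▸ h2') hb hb'

lemma chain_prefix {V : Type} {G : TermGraph LamSig arL V} {PG : V → List V}
    (hG : CorrectPrefix G PG) {a b : V}
    (h : Relation.ReflTransGen (SStep G) a b) : PG b <+: PG a := by
  induction h with
  | refl => exact List.prefix_refl _
  | @tail mid c _ hstep ih =>
    rcases hG.delCond0 mid c hstep.1 hstep.2 with ⟨u, hu⟩
    exact List.IsPrefix.trans ⟨[u], hu⟩ ih

/-- Removing all scope-delimiter vertices from a lambda term graph (with correct
    abstraction-prefix function) and retaining the prefixes yields a lambda
    higher-order term graph (the retained prefix function is correct in the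
    higher-order sense); and this removal operation is a left inverse of delimiter
    insertion: first inserting delimiter chains into a lambda higher-order term
    graph and then removing them returns the original lambda higher-order term
    graph (via a prefix-preserving isomorphism). -/
theorem delimiter_removal_correct_and_left_inverse_of_insertion
    {V V' : Type} (G : TermGraph LamSig arL V) (PG : V → List V)
    (hG : CorrectPrefix G PG)
    (H' : TermGraph HoSig arH V') (P' : V' → List V') (ι' : V' → V)
    (hrem : DelimCorr H' P' G PG ι') :
    CorrectPrefixHo H' P' ∧
    ∀ {V'' : Type} (H : TermGraph HoSig arH V'') (P : V'' → List V'')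
      (ι : V'' → V), CorrectPrefixHo H P → DelimCorr H P G PG ι →
      ∃ h : V'' → V', IsHom H H' h ∧ Function.Bijective h ∧
        ∀ w, (P w).map h = P' (h w) := by
  obtain ⟨ι'inj, ι'root, ι'lab, ι'surj, ι'pref, ι'args⟩ := hrem
  constructor
  · constructor
    · have h := ι'pref H'.root
      rw [ι'root, hG.root] at h
      exact (List.map_eq_nil_iff.mp h.symm)
    · intro v hv
      have h := ι'pref v
      have hl : G.lab (ι' v) = LamSig.bh := by rw [ι'lab, hv]; rfl
      rw [hG.blackhole _ hl] at h
      exact (List.map_eq_nil_iff.mp h.symm)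
    · intro w v hw hv
      rcases (ι'args w 0 v).mp hv with ⟨a, ha, hchain⟩
      have hl : G.lab (ι' w) = LamSig.lam := by rw [ι'lab, hw]; rfl
      have hpa := hG.lamCond (ι' w) a hl ha
      have h1 : PG (ι' v) <+: PG a := chain_prefix hG hchain
      rw [hpa, ι'pref, ι'pref] at h1
      have h2 : (P' v).map ι' <+: (P' w ++ [w]).map ι' := by
        rwa [List.map_append, List.map_singleton]
      exact map_prefix_reflect ι'inj h2
    · intro w v k hw hv
      rcases (ι'args w k v).mp hv with ⟨a, ha, hchain⟩
      have hl : G.lab (ι' w) = LamSig.app := by rw [ι'lab, hw]; rfl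
      have hpa := hG.appCond (ι' w) a k hl ha
      have h1 : PG (ι' v) <+: PG a := chain_prefix hG hchain
      rw [hpa, ι'pref, ι'pref] at h1
      exact map_prefix_reflect ι'inj h1
    · intro w v hw hv
      rcases (ι'args w 0 v).mp hv with ⟨a, ha, hchain⟩
      have hl : G.lab (ι' w) = LamSig.var := by rw [ι'lab, hw]; rfl
      obtain ⟨halam, hpre⟩ := hG.varCond (ι' w) a hl ha
      have hav : a = ι' v := by
        rcases Relation.ReflTransGen.cases_head hchain with h | ⟨c, hc, _⟩
        · exact h
        · exact LamSig.noConfusion (halam.symm.trans hc.1)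
      subst hav
      have hvl : H'.lab v = HoSig.lam := by
        have := (ι'lab v).symm.trans halam
        cases hv : H'.lab v <;> rw [hv] at this <;> simp_all [labToLam]
      refine ⟨hvl, ?_⟩
      have : (P' v ++ [v]).map ι' = (P' w).map ι' := by
        rw [List.map_append, List.map_singleton, ← ι'pref, ← ι'pref]
        exact hpre
      exact List.map_injective_iff.mpr ι'inj this
  · intro V'' H P ι _hH hcorr
    obtain ⟨ιinj, ιroot, ιlab, ιsurj, ιpref, ιargs⟩ := hcorr
    have hex : ∀ v : V'', ∃ u', ι' u' = ι v := by
      intro v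
      apply ι'surj
      rw [ιlab]; exact labToLam_ne_del _
    choose h hh using hex
    have hlabeq : ∀ v, H'.lab (h v) = H.lab v := by
      intro v
      apply labToLam_inj
      rw [← ι'lab, hh, ιlab]
    have hargs : ∀ v, H'.args (h v) = (H.args v).map h := by
      intro v
      apply List.ext_getElem?
      intro i
      cases hu : (H.args v)[i]? with
      | some u =>
        rcases (ιargs v i u).mp hu with ⟨a, ha, hchain⟩
        have : (H'.args (h v))[i]? = some (h u) := by
          apply (ι'args (h v) i (h u)).mpr
          exact ⟨a, by rw [hh]; exact ha, by rw [hh]; exact hchain⟩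
        rw [this, List.getElem?_map, hu]; rfl
      | none =>
        have hlen : (H'.args (h v)).length = (H.args v).length := by
          rw [H'.arity_ok, H.arity_ok, hlabeq]
        have hge : (H.args v).length ≤ i := by
          by_contra hc
          push_neg at hc
          rw [List.getElem?_eq_getElem hc] at hu; exact Option.some_ne_none _ hu
        rw [List.getElem?_eq_none (by rwa [hlen]),
          List.getElem?_eq_none (by rwa [List.length_map])]
    refine ⟨h, ⟨?_, fun v => hlabeq v, hargs⟩, ⟨?_, ?_⟩, ?_⟩
    · apply ι'inj
      rw [hh, ιroot, ι'root]
    · intro a b hab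
      apply ιinj
      rw [← hh, ← hh, hab]
    · intro u'
      have hne : G.lab (ι' u') ≠ LamSig.del := by
        rw [ι'lab]; exact labToLam_ne_del _
      rcases ιsurj (ι' u') hne with ⟨v, hv⟩
      exact ⟨v, ι'inj (by rw [hh, hv])⟩
    · intro w
      apply List.map_injective_iff.mpr ι'inj
      rw [← ι'pref, hh, ιpref, List.map_map]
      congr 1
      ext x
      simp [hh]
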